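/- Let (C,R) be a directed graph with ℓ = t = 1 that is not strongly connected and has |C'| = 1. Let j ∈ C'' be such that some arc with tail j leaves the strong component C''(j) containing j (i.e., ϱ^out({j}) ∩ ϱ^out(C''(j)) ≠ ∅). Then W(j) ⊆ W(j') for every j' ∈ C''(j). -/

import Mathlib

open Finset

/-- Reachability (existence of a directed walk) in the directed graph with arc set `R`. -/
def Reach {c : ℕ} (R : Finset (Fin c × Fin c)) (a b : Fin c) : Prop :=
  Relation.ReflTransGen (fun x y => (x, y) ∈ R) a b

/-- `p` is a directed path in the graph with arc set `R`. -/
def IsDipath {c : ℕ} (R : Finset (Fin c × Fin c)) (p : List (Fin c)) : Prop :=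
  p ≠ [] ∧ p.Nodup ∧ p.Chain' (fun a b => (a, b) ∈ R)

/-- `p` is a directed path from `a` to `b` in the graph with arc set `R`. -/
def IsDipathFromTo {c : ℕ} (R : Finset (Fin c × Fin c)) (p : List (Fin c))
    (a b : Fin c) : Prop :=
  IsDipath R p ∧ p.head? = some a ∧ p.getLast? = some b

/-- There is a directed path from `a` to `b` all of whose intermediate steps stay in `S`
(for `a ∈ S` this says that there is a directed path from `a` to `b` with vertex set
contained in `S`). -/
def ReachIn {c : ℕ} (R : Finset (Fin c × Fin c)) (S : Finset (Fin c))
    (a b : Fin c) : Prop :=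
  Relation.ReflTransGen (fun x y => (x, y) ∈ R ∧ x ∈ S ∧ y ∈ S) a b

/-- The set of arcs of `R` entering the vertex set `U`. -/
def arcsIn {c : ℕ} (R : Finset (Fin c × Fin c)) (U : Finset (Fin c)) :
    Finset (Fin c × Fin c) :=
  R.filter (fun a => a.1 ∉ U ∧ a.2 ∈ U)

/-- The set of arcs of `R` leaving the vertex set `U`. -/
def arcsOut {c : ℕ} (R : Finset (Fin c × Fin c)) (U : Finset (Fin c)) :
    Finset (Fin c × Fin c) :=
  R.filter (fun a => a.1 ∈ U ∧ a.2 ∉ U)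

/-- For a graph whose unique absorbing strong component is `{r}` (so `C'' = C \ {r}`),
`Uset R r i = U(i) = {k ∈ C : every directed path from k to r traverses i}`. -/
noncomputable def Uset {c : ℕ} (R : Finset (Fin c × Fin c)) (r i : Fin c) :
    Finset (Fin c) :=
  @Finset.filter _ (fun k => ∀ p : List (Fin c), IsDipathFromTo R p k r → i ∈ p)
    (Classical.decPred _) Finset.univ

/-- `U ∈ C''_{j-inarb}`: `U ⊆ C'' = C \ {r}`, every vertex of `U` has a directed path to
`j` with vertex set contained in `U`, and every vertex of `C'' \ U` has a directed path
to `C' = {r}` with vertex set contained in `C \ U`. -/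
def Jinarb {c : ℕ} (R : Finset (Fin c × Fin c)) (r j : Fin c)
    (U : Finset (Fin c)) : Prop :=
  U ⊆ Finset.univ.erase r ∧
    (∀ i' ∈ U, ReachIn R U i' j) ∧
    (∀ i' ∈ Finset.univ.erase r \ U, ReachIn R (Finset.univ \ U) i' r)

/-- The vertex set of the strong component of the graph containing `j`. -/
noncomputable def SCC {c : ℕ} (R : Finset (Fin c × Fin c)) (j : Fin c) :
    Finset (Fin c) :=
  @Finset.filter _ (fun k => Reach R j k ∧ Reach R k j) (Classical.decPred _) Finset.univ

/-- `I` is a subset of `C'' = C \ {r}` such that the sets `U(i)`, `i ∈ I`, are pairwise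
disjoint with union `U`. -/
def IsPartitionInto {c : ℕ} (R : Finset (Fin c × Fin c)) (r : Fin c)
    (U I : Finset (Fin c)) : Prop :=
  I ⊆ Finset.univ.erase r ∧
    (↑I : Set (Fin c)).PairwiseDisjoint (fun i => Uset R r i) ∧
    U = I.biUnion (Uset R r)

/-- `W(j) = ⋃_{U ∈ C''_{j-inarb}} I_U`, where `I_U` is the unique subset of `C''` with
`U = ⋃*_{i ∈ I_U} U(i)` (pairwise disjoint union). -/
def Wset {c : ℕ} (R : Finset (Fin c × Fin c)) (r j : Fin c) : Set (Fin c) :=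
  {i | ∃ U I : Finset (Fin c), Jinarb R r j U ∧ IsPartitionInto R r U I ∧ i ∈ I}

/-- `U(C''(j)) = {k ∈ C'' : every directed path from k to r traverses C''(j)}`. -/
noncomputable def UsetSC {c : ℕ} (R : Finset (Fin c × Fin c)) (r j : Fin c) :
    Finset (Fin c) :=
  @Finset.filter _
    (fun k => ∀ p : List (Fin c), IsDipathFromTo R p k r → ∃ x ∈ p, x ∈ SCC R j)
    (Classical.decPred _) (Finset.univ.erase r)

section AuxReach

variable {c : ℕ} {R : Finset (Fin c × Fin c)} {S T : Finset (Fin c)} {a b : Fin c}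

lemma reachIn_mono (h : S ⊆ T) (hab : ReachIn R S a b) : ReachIn R T a b :=
  Relation.ReflTransGen.mono (r := fun x y => (x, y) ∈ R ∧ x ∈ S ∧ y ∈ S)
    (p := fun x y => (x, y) ∈ R ∧ x ∈ T ∧ y ∈ T)
    (fun x y hxy => ⟨hxy.1, h hxy.2.1, h hxy.2.2⟩) a b hab

lemma reach_of_reachIn (hab : ReachIn R S a b) : Reach R a b :=
  Relation.ReflTransGen.mono (r := fun x y => (x, y) ∈ R ∧ x ∈ S ∧ y ∈ S)
    (p := fun x y => (x, y) ∈ R) (fun x y hxy => hxy.1) a b hab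

lemma reachIn_univ_of_reach (hab : Reach R a b) : ReachIn R Finset.univ a b :=
  Relation.ReflTransGen.mono (r := fun x y => (x, y) ∈ R)
    (p := fun x y => (x, y) ∈ R ∧ x ∈ Finset.univ ∧ y ∈ Finset.univ)
    (fun x y hxy => ⟨hxy, Finset.mem_univ x, Finset.mem_univ y⟩) a b hab

lemma eq_of_reachIn_of_not_mem (hab : ReachIn R S a b) (ha : a ∉ S) : a = b := by
  rcases Relation.ReflTransGen.cases_head hab with h | ⟨c', hc, _⟩
  · exact h
  · exact absurd hc.2.1 ha

lemma reachIn_last_mem (hab : ReachIn R S a b) : a = b ∨ b ∈ S := by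
  induction hab with
  | refl => exact Or.inl rfl
  | tail h step ih => exact Or.inr step.2.2

end AuxReach
section AuxPath

variable {c : ℕ} {R : Finset (Fin c × Fin c)} {S T : Finset (Fin c)} {a b : Fin c}

lemma exists_path_of_reachIn (hab : ReachIn R S a b) :
    ∃ p, IsDipathFromTo R p a b ∧ ∀ x ∈ p, x = a ∨ x ∈ S := by
  induction hab with
  | refl =>
    exact ⟨[a], ⟨⟨by simp, by simp, List.IsChain.singleton _⟩, by simp, by simp⟩, by simp⟩
  | @tail b' y h step ih =>
    obtain ⟨p, ⟨⟨hne, hnd, hch⟩, hhd, hlast⟩, hmem⟩ := ih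
    by_cases hy : y ∈ p
    · obtain ⟨q, t, rfl⟩ := List.append_of_mem hy
      have hsub : (q ++ [y]).Sublist (q ++ y :: t) := by
        have := List.sublist_append_left (q ++ [y]) t
        simpa using this
      refine ⟨q ++ [y], ⟨⟨by simp, hsub.nodup hnd, ?_⟩, ?_, List.getLast?_concat⟩, ?_⟩
      · have : List.Chain' (fun a b => (a, b) ∈ R) ((q ++ [y]) ++ t) := by
          simpa using hch
        exact (List.isChain_append.mp this).1
      · cases q with
        | nil => simpa using hhd
        | cons w q' => simpa using hhd
      · intro x hx
        exact hmem x (by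
          rcases List.mem_append.mp hx with h1 | h2
          · exact List.mem_append.mpr (Or.inl h1)
          · simp at h2; subst h2; exact hy)
    · refine ⟨p ++ [y], ⟨⟨by simp, ?_, ?_⟩, ?_, List.getLast?_concat⟩, ?_⟩
      · simp [List.nodup_append, hnd, hy]
        intro x hx hxy; exact hy (hxy ▸ hx)
      · refine List.isChain_append.mpr ⟨hch, by simp, ?_⟩
        intro x hx z hz
        simp at hz; subst hz
        rw [hlast] at hx; simp at hx; subst hx
        exact step.1
      · cases p with
        | nil => simp at hne
        | cons w q' => simpa using hhd
      · intro x hx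
        rcases List.mem_append.mp hx with h1 | h2
        · exact hmem x h1
        · simp at h2; subst h2; exact Or.inr step.2.2

lemma reachIn_of_path :
    ∀ (p : List (Fin c)) (a : Fin c), IsDipathFromTo R p a b →
      (∀ x ∈ p, x ∈ S) → ReachIn R S a b := by
  intro p
  induction p with
  | nil => intro a h _; exact absurd rfl h.1.1
  | cons x rest ih =>
    intro a h hmem
    have hxa : x = a := by simpa using h.2.1
    subst hxa
    cases rest with
    | nil =>
      have : x = b := by simpa using h.2.2
      subst this; exact Relation.ReflTransGen.refl
    | cons y rest' =>
      have hch := h.1.2.2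
      have harc : (x, y) ∈ R := (List.isChain_cons_cons.mp hch).1
      have hrest : IsDipathFromTo R (y :: rest') y b := by
        refine ⟨⟨by simp, h.1.2.1.of_cons, (List.isChain_cons_cons.mp hch).2⟩, by simp, ?_⟩
        rw [← h.2.2]; simp [List.getLast?_cons_cons]
      have := ih y hrest (fun z hz => hmem z (List.mem_cons_of_mem _ hz))
      exact Relation.ReflTransGen.head
        ⟨harc, hmem x (by simp), hmem y (by simp)⟩ this

lemma reachIn_split (hab : ReachIn R S a b) (h : ¬ ReachIn R (S \ T) a b) :
    ∃ z ∈ T, ReachIn R S a z ∧ ReachIn R S z b := by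
  revert h
  induction hab using Relation.ReflTransGen.head_induction_on with
  | refl => intro h; exact absurd Relation.ReflTransGen.refl h
  | @head a' c' step rest ih =>
    intro h
    by_cases haT : a' ∈ T
    · exact ⟨a', haT, Relation.ReflTransGen.refl, Relation.ReflTransGen.head step rest⟩
    by_cases hcT : c' ∈ T
    · exact ⟨c', hcT, Relation.ReflTransGen.single step, rest⟩
    by_cases hcb : ReachIn R (S \ T) c' b
    · exact absurd (Relation.ReflTransGen.head
        ⟨step.1, Finset.mem_sdiff.mpr ⟨step.2.1, haT⟩,
          Finset.mem_sdiff.mpr ⟨step.2.2, hcT⟩⟩ hcb) h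
    · obtain ⟨z, hz, h1, h2⟩ := ih hcb
      exact ⟨z, hz, Relation.ReflTransGen.head step h1, h2⟩

end AuxPath
section AuxDom

variable {c : ℕ} {R : Finset (Fin c × Fin c)} {r i k i₁ i₂ : Fin c}

lemma mem_SCC {j k : Fin c} : k ∈ SCC R j ↔ Reach R j k ∧ Reach R k j := by
  unfold SCC
  rw [@Finset.mem_filter _ _ (Classical.decPred _)]
  simp

lemma mem_Uset : k ∈ Uset R r i ↔ ∀ p, IsDipathFromTo R p k r → i ∈ p := by
  unfold Uset
  rw [@Finset.mem_filter _ _ (Classical.decPred _)]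
  simp

lemma mem_sd_of_ne {u v : Fin c} (h : u ≠ v) : u ∈ Finset.univ \ ({v} : Finset (Fin c)) := by
  simp [h]

lemma mem_Uset_iff (hir : i ≠ r) :
    k ∈ Uset R r i ↔ ¬ ReachIn R (Finset.univ \ {i}) k r := by
  rw [mem_Uset]
  constructor
  · intro hk hwalk
    obtain ⟨p, hp, hmem⟩ := exists_path_of_reachIn hwalk
    rcases hmem i (hk p hp) with h1 | h2
    · subst h1
      exact hir (eq_of_reachIn_of_not_mem hwalk (by simp))
    · simp at h2
  · intro hd p hp
    by_contra hip
    exact hd (reachIn_of_path p k hp (fun x hx => mem_sd_of_ne (fun hxi => hip (hxi ▸ hx))))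

lemma self_mem_Uset : i ∈ Uset R r i :=
  mem_Uset.mpr (fun p hp => List.mem_of_mem_head? (by rw [hp.2.1]; simp))

lemma r_not_mem_Uset (hir : i ≠ r) : r ∉ Uset R r i := by
  rw [mem_Uset_iff hir]
  simp only [not_not]
  exact Relation.ReflTransGen.refl

lemma dom_trans (h21 : ¬ ReachIn R (Finset.univ \ {i₂}) i₁ r)
    (h1k : ¬ ReachIn R (Finset.univ \ {i₁}) k r) :
    ¬ ReachIn R (Finset.univ \ {i₂}) k r := by
  intro w
  have hne : ¬ ReachIn R ((Finset.univ \ {i₂}) \ {i₁}) k r := fun h' =>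
    h1k (reachIn_mono (by intro x hx; simp at hx ⊢; exact hx.2) h')
  obtain ⟨z, hz, _, h2⟩ := reachIn_split w hne
  simp at hz; subst hz
  exact h21 h2

lemma uset_mono (h12 : i₁ ∈ Uset R r i₂) (h1r : i₁ ≠ r) (h2r : i₂ ≠ r) :
    Uset R r i₁ ⊆ Uset R r i₂ := by
  intro k hk
  rw [mem_Uset_iff h2r] at h12 ⊢
  rw [mem_Uset_iff h1r] at hk
  exact dom_trans h12 hk

lemma dom_total (hkr : ReachIn R Finset.univ k r) (h1r : i₁ ≠ r) (h2r : i₂ ≠ r)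
    (hk1 : ¬ ReachIn R (Finset.univ \ {i₁}) k r)
    (hk2 : ¬ ReachIn R (Finset.univ \ {i₂}) k r) :
    ¬ ReachIn R (Finset.univ \ {i₁}) i₂ r ∨ ¬ ReachIn R (Finset.univ \ {i₂}) i₁ r := by
  by_cases h12 : i₁ = i₂
  · subst h12
    left
    intro h
    exact h1r (eq_of_reachIn_of_not_mem h (by simp))
  by_contra hcon
  push_neg at hcon
  obtain ⟨A, B⟩ := hcon
  revert hk1 hk2
  induction hkr using Relation.ReflTransGen.head_induction_on with
  | refl =>
    intro hk1 _
    exact hk1 Relation.ReflTransGen.refl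
  | @head a x step rest ih =>
    intro hk1 hk2
    by_cases ha1 : a = i₁
    · subst ha1; exact hk2 B
    by_cases ha2 : a = i₂
    · subst ha2; exact hk1 A
    refine ih ?_ ?_
    · intro wx
      by_cases hx1 : x = i₁
      · subst hx1
        exact hk2 (Relation.ReflTransGen.head
          ⟨step.1, mem_sd_of_ne ha2, mem_sd_of_ne h12⟩ B)
      · exact hk1 (Relation.ReflTransGen.head
          ⟨step.1, mem_sd_of_ne ha1, mem_sd_of_ne hx1⟩ wx)
    · intro wx
      by_cases hx2 : x = i₂
      · subst hx2
        exact hk1 (Relation.ReflTransGen.head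
          ⟨step.1, mem_sd_of_ne ha1, mem_sd_of_ne (fun h => h12 h.symm)⟩ A)
      · exact hk2 (Relation.ReflTransGen.head
          ⟨step.1, mem_sd_of_ne ha2, mem_sd_of_ne hx2⟩ wx)

lemma dom_antisymm (hreach : ∀ k : Fin c, Reach R k r)
    (hne : i₁ ≠ i₂) (h12 : i₁ ∈ Uset R r i₂) (h21 : i₂ ∈ Uset R r i₁) : False := by
  obtain ⟨p, hp, _⟩ := exists_path_of_reachIn (reachIn_univ_of_reach (hreach i₁))
  have hi2p : i₂ ∈ p := mem_Uset.mp h12 p hp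
  obtain ⟨q, t, rfl⟩ := List.append_of_mem hi2p
  obtain ⟨⟨hne', hnd, hch⟩, hhd, hlast⟩ := hp
  have hz : (i₂ :: t).getLast? = some ((i₂ :: t).getLast (by simp)) :=
    List.getLast?_eq_getLast (by simp)
  have hsufpath : IsDipathFromTo R (i₂ :: t) i₂ r := by
    refine ⟨⟨by simp, (List.nodup_append'.mp hnd).2.1, (List.isChain_append.mp hch).2.1⟩,
      by simp, ?_⟩
    rw [← hlast, List.getLast?_append, hz]
    simp
  have hi1t : i₁ ∈ i₂ :: t := mem_Uset.mp h21 _ hsufpath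
  rcases List.mem_cons.mp hi1t with h | h
  · exact hne h
  · cases q with
    | nil =>
      have : i₂ = i₁ := by simpa using hhd
      exact hne this.symm
    | cons w q' =>
      have hw : w = i₁ := by simpa using hhd
      have hni : i₁ ∉ q' ++ i₂ :: t := hw ▸ (List.nodup_cons.mp hnd).1
      exact hni (List.mem_append.mpr (Or.inr (List.mem_cons_of_mem _ h)))

end AuxDom
section AuxSCC

variable {c : ℕ} {R : Finset (Fin c × Fin c)} {j a b : Fin c}

lemma reachIn_SCC (ha : a ∈ SCC R j) (hb : b ∈ SCC R j) : ReachIn R (SCC R j) a b := by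
  obtain ⟨hja, haj⟩ := mem_SCC.mp ha
  obtain ⟨hjb, hbj⟩ := mem_SCC.mp hb
  have hab : Reach R a b := haj.trans hjb
  clear ha hb hjb
  induction hab using Relation.ReflTransGen.head_induction_on with
  | refl => exact Relation.ReflTransGen.refl
  | @head x y step rest ih =>
    have hjy : Reach R j y := hja.trans (Relation.ReflTransGen.single step)
    have hyj : Reach R y j := (rest : Reach R y b).trans hbj
    have hxmem : x ∈ SCC R j :=
      mem_SCC.mpr ⟨hja, (Relation.ReflTransGen.single step).trans hyj⟩
    have hymem : y ∈ SCC R j := mem_SCC.mpr ⟨hjy, hyj⟩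
    exact Relation.ReflTransGen.head ⟨step, hxmem, hymem⟩ (ih hjy hyj)

end AuxSCC
theorem stmt16 {c : ℕ}
    (R : Finset (Fin c × Fin c)) (hloop : ∀ v : Fin c, (v, v) ∉ R)
    -- `{r} = C'` is the vertex set of the unique absorbing strong component (`ℓ = t = 1`):
    (r : Fin c)
    (habs : ∀ p ∈ R, p.1 ≠ r)
    (hreach : ∀ k : Fin c, Reach R k r)
    (hweak : ∀ a b : Fin c,
      Relation.ReflTransGen (fun x y => (x, y) ∈ R ∨ (y, x) ∈ R) a b)
    (hnsc : ¬ ∀ a b : Fin c, Reach R a b)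
    (j : Fin c) (hj : j ≠ r)
    -- some arc with tail `j` leaves the strong component `C''(j)` containing `j`:
    (hout : (arcsOut R {j} ∩ arcsOut R (SCC R j)).Nonempty) :
    ∀ j' ∈ SCC R j, Wset R r j ⊆ Wset R r j' := by
  classical
  obtain ⟨⟨a1, k₀⟩, ha⟩ := hout
  rw [Finset.mem_inter] at ha
  obtain ⟨ha1, ha2⟩ := ha
  unfold arcsOut at ha1 ha2
  rw [Finset.mem_filter] at ha1 ha2
  have ha1j : a1 = j := by simpa using ha1.2.1
  rw [ha1j] at ha1 ha2
  have hk0R : (j, k₀) ∈ R := ha1.1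
  have hk0scc : k₀ ∉ SCC R j := ha2.2.2
  intro j' hj' i hi
  obtain ⟨U, I, hU, hI, hiI⟩ := hi
  obtain ⟨hU1, hU2, hU3⟩ := hU
  obtain ⟨hI1, hI2, hI3⟩ := hI
  -- basic facts
  have hrU : r ∉ U := fun h => (Finset.mem_erase.mp (hU1 h)).1 rfl
  have hjscc : j ∈ SCC R j :=
    mem_SCC.mpr ⟨Relation.ReflTransGen.refl, Relation.ReflTransGen.refl⟩
  have hreq : ∀ x : Fin c, Reach R r x → r = x := by
    intro x hx
    rcases Relation.ReflTransGen.cases_head hx with h | ⟨y, hy, _⟩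
    · exact h
    · exact absurd rfl (habs _ hy)
  have hrscc : r ∉ SCC R j := fun h => hj ((hreq j (mem_SCC.mp h).2).symm)
  have hUsub : ∀ i' ∈ I, Uset R r i' ⊆ U := by
    intro i' h
    rw [hI3]
    exact Finset.subset_biUnion_of_mem _ h
  have hiU : i ∈ U := hUsub i hiI self_mem_Uset
  have hjU : j ∈ U := by
    rcases reachIn_last_mem (hU2 i hiU) with h | h
    · exact h ▸ hiU
    · exact h
  -- the auxiliary set E
  set E := Finset.univ.filter (fun k : Fin c => k ≠ r ∧ k ∉ U ∧
      ¬ ReachIn R (Finset.univ \ (U ∪ SCC R j)) k r) with hE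
  have memE : ∀ {k : Fin c}, k ∈ E ↔ (k ≠ r ∧ k ∉ U ∧
      ¬ ReachIn R (Finset.univ \ (U ∪ SCC R j)) k r) := by
    intro k
    rw [hE, Finset.mem_filter]
    simp
  have hrE : r ∉ E := fun h => (memE.mp h).1 rfl
  have hsccsub : SCC R j ⊆ U ∪ E := by
    intro x hx
    by_cases hxU : x ∈ U
    · exact Finset.mem_union_left _ hxU
    refine Finset.mem_union_right _ (memE.mpr ⟨fun h => hrscc (h ▸ hx), hxU, ?_⟩)
    intro w
    have hxe := eq_of_reachIn_of_not_mem w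
      (fun hmem => (Finset.mem_sdiff.mp hmem).2 (Finset.mem_union_right _ hx))
    exact hrscc (hxe ▸ hx)
  -- condition (i) for U ∪ E
  have hjj' : ReachIn R (U ∪ E) j j' :=
    reachIn_mono hsccsub (reachIn_SCC hjscc hj')
  have hUj' : ∀ u ∈ U, ReachIn R (U ∪ E) u j' := fun u hu =>
    (reachIn_mono Finset.subset_union_left (hU2 u hu)).trans hjj'
  have hEj' : ∀ k ∈ E, ReachIn R (U ∪ E) k j' := by
    intro k hk
    have hw : ReachIn R Finset.univ k r := reachIn_univ_of_reach (hreach k)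
    revert hk
    induction hw using Relation.ReflTransGen.head_induction_on with
    | refl => exact fun hk => absurd hk hrE
    | @head a x step rest ih =>
      intro haE
      obtain ⟨har, haU, haw⟩ := memE.mp haE
      by_cases hascc : a ∈ SCC R j
      · exact reachIn_mono hsccsub (reachIn_SCC hascc hj')
      by_cases hxU : x ∈ U
      · exact Relation.ReflTransGen.head
          ⟨step.1, Finset.mem_union_right _ haE, Finset.mem_union_left _ hxU⟩
          (hUj' x hxU)
      by_cases hxscc : x ∈ SCC R j
      · exact Relation.ReflTransGen.head
          ⟨step.1, Finset.mem_union_right _ haE, hsccsub hxscc⟩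
          (reachIn_mono hsccsub (reachIn_SCC hxscc hj'))
      have hamem : a ∈ Finset.univ \ (U ∪ SCC R j) := by
        simp [haU, hascc]
      have hxE : x ∈ E := by
        refine memE.mpr ⟨?_, hxU, ?_⟩
        · rintro rfl
          exact haw (Relation.ReflTransGen.single ⟨step.1, hamem, by simp [hrU, hrscc]⟩)
        · intro wx
          exact haw (Relation.ReflTransGen.head
            ⟨step.1, hamem, by simp [hxU, hxscc]⟩ wx)
      exact Relation.ReflTransGen.head
        ⟨step.1, Finset.mem_union_right _ haE, Finset.mem_union_right _ hxE⟩ (ih hxE)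
  -- condition (ii) for U ∪ E
  have hII : ∀ k ∈ Finset.univ.erase r \ (U ∪ E),
      ReachIn R (Finset.univ \ (U ∪ E)) k r := by
    intro k hk
    rw [Finset.mem_sdiff, Finset.mem_erase] at hk
    obtain ⟨⟨hkr, -⟩, hkUE⟩ := hk
    have hkU : k ∉ U := fun h => hkUE (Finset.mem_union_left _ h)
    have hkE : k ∉ E := fun h => hkUE (Finset.mem_union_right _ h)
    have hw : ReachIn R (Finset.univ \ (U ∪ SCC R j)) k r := by
      by_contra hcon
      exact hkE (memE.mpr ⟨hkr, hkU, hcon⟩)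
    clear hkUE hkU hkE hkr
    induction hw using Relation.ReflTransGen.head_induction_on with
    | refl => exact Relation.ReflTransGen.refl
    | @head a x step rest ih =>
      obtain ⟨harc, hamem, hxmem⟩ := step
      have haE : a ∉ E := fun h =>
        (memE.mp h).2.2 (Relation.ReflTransGen.head ⟨harc, hamem, hxmem⟩ rest)
      have hxE : x ∉ E := fun h => (memE.mp h).2.2 rest
      refine Relation.ReflTransGen.head ⟨harc, ?_, ?_⟩ ih
      · rw [Finset.mem_sdiff] at hamem ⊢
        exact ⟨hamem.1, fun h => (Finset.mem_union.mp h).elim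
          (fun h' => hamem.2 (Finset.mem_union_left _ h')) haE⟩
      · rw [Finset.mem_sdiff] at hxmem ⊢
        exact ⟨hxmem.1, fun h => (Finset.mem_union.mp h).elim
          (fun h' => hxmem.2 (Finset.mem_union_left _ h')) hxE⟩
  -- key structural fact: blocks of elements of E stay inside E
  have hF2 : ∀ s ∈ E, Uset R r s ⊆ E := by
    intro s hs k hk
    obtain ⟨hsr, hsU, hsw⟩ := memE.mp hs
    rw [mem_Uset_iff hsr] at hk
    have hUs : U ⊆ Finset.univ \ {s} := fun u hu => mem_sd_of_ne (fun h => hsU (h ▸ hu))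
    refine memE.mpr ⟨?_, ?_, ?_⟩
    · rintro rfl
      exact hk Relation.ReflTransGen.refl
    · -- k ∉ U
      intro hkU
      have hDj : ¬ ReachIn R (Finset.univ \ {s}) j r := fun wj =>
        hk ((reachIn_mono hUs (hU2 k hkU)).trans wj)
      have hsccs : s ∈ SCC R j := by
        have hjs : Reach R j s := by
          obtain ⟨z, hz, h1, -⟩ :=
            reachIn_split (reachIn_univ_of_reach (hreach j)) hDj
          simp only [Finset.mem_singleton] at hz
          subst hz
          exact reach_of_reachIn h1
        have hsj : Reach R s j := by
          have hWs : ReachIn R (Finset.univ \ U) s r := hU3 s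
            (Finset.mem_sdiff.mpr ⟨Finset.mem_erase.mpr ⟨hsr, Finset.mem_univ _⟩, hsU⟩)
          have hcond : ¬ ReachIn R ((Finset.univ \ U) \ SCC R j) s r := by
            rw [sdiff_sdiff_left, Finset.sup_eq_union]
            exact hsw
          obtain ⟨z, hzscc, h1, -⟩ := reachIn_split hWs hcond
          exact (reach_of_reachIn h1).trans (mem_SCC.mp hzscc).2
        exact mem_SCC.mpr ⟨hjs, hsj⟩
      have hDk0 : ¬ ReachIn R (Finset.univ \ {s}) k₀ r := by
        intro w
        exact hDj (Relation.ReflTransGen.head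
          ⟨hk0R, mem_sd_of_ne (fun h => hsU (h ▸ hjU)),
            mem_sd_of_ne (fun h => hk0scc (h ▸ hsccs))⟩ w)
      have hk0s : Reach R k₀ s := by
        obtain ⟨z, hz, h1, -⟩ :=
          reachIn_split (reachIn_univ_of_reach (hreach k₀)) hDk0
        simp only [Finset.mem_singleton] at hz
        subst hz
        exact reach_of_reachIn h1
      exact hk0scc (mem_SCC.mpr ⟨Relation.ReflTransGen.single hk0R,
        hk0s.trans (mem_SCC.mp hsccs).2⟩)
    · -- the walk condition
      intro wk
      by_cases hsscc : s ∈ SCC R j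
      · exact hk (reachIn_mono (fun x hx => by
          rw [Finset.mem_sdiff] at hx
          exact mem_sd_of_ne
            (fun he => hx.2 (he ▸ Finset.mem_union_right _ hsscc))) wk)
      · have hcond : ¬ ReachIn R ((Finset.univ \ (U ∪ SCC R j)) \ {s}) k r := fun h =>
          hk (reachIn_mono (fun x hx => by
            rw [Finset.mem_sdiff, Finset.mem_sdiff] at hx
            exact Finset.mem_sdiff.mpr ⟨Finset.mem_univ _, hx.2⟩) h)
        obtain ⟨z, hz, -, h2⟩ := reachIn_split wk hcond
        simp only [Finset.mem_singleton] at hz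
        subst hz
        exact hsw h2
  -- maximal blocks inside E
  have hEr : ∀ m ∈ E, m ≠ r := fun m h => (memE.mp h).1
  set IE := E.filter (fun m => Uset R r m ⊆ E ∧
    ∀ m' ∈ E, m ∈ Uset R r m' → Uset R r m' ⊆ E → Uset R r m' ⊆ Uset R r m) with hIE
  have memIE : ∀ {m : Fin c}, m ∈ IE ↔ m ∈ E ∧ Uset R r m ⊆ E ∧
      ∀ m' ∈ E, m ∈ Uset R r m' → Uset R r m' ⊆ E → Uset R r m' ⊆ Uset R r m := by
    intro m
    rw [hIE, Finset.mem_filter]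
  have hcover : ∀ s ∈ E, ∃ m ∈ IE, s ∈ Uset R r m := by
    intro s hs
    set T := E.filter (fun m => s ∈ Uset R r m ∧ Uset R r m ⊆ E) with hT
    have hsT : s ∈ T := by
      rw [hT, Finset.mem_filter]
      exact ⟨hs, self_mem_Uset, hF2 s hs⟩
    obtain ⟨m, hmT, hmax⟩ := T.exists_max_image (fun m => (Uset R r m).card) ⟨s, hsT⟩
    rw [hT, Finset.mem_filter] at hmT
    obtain ⟨hmE, hsm, hmsub⟩ := hmT
    refine ⟨m, memIE.mpr ⟨hmE, hmsub, ?_⟩, hsm⟩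
    intro m' hm'E hmm' hm'sub
    have hsm' : s ∈ Uset R r m' := by
      rw [mem_Uset_iff (hEr m' hm'E)]
      rw [mem_Uset_iff (hEr m' hm'E)] at hmm'
      rw [mem_Uset_iff (hEr m hmE)] at hsm
      exact dom_trans hmm' hsm
    have hm'T : m' ∈ T := by
      rw [hT, Finset.mem_filter]
      exact ⟨hm'E, hsm', hm'sub⟩
    have hcard := hmax m' hm'T
    have hsub2 : Uset R r m ⊆ Uset R r m' :=
      uset_mono hmm' (hEr m hmE) (hEr m' hm'E)
    rw [Finset.eq_of_subset_of_card_le hsub2 hcard]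
  have hEbiu : ∀ s ∈ E, ∃ m ∈ IE, s ∈ Uset R r m := hcover
  have hdisjE : ∀ m₁ ∈ IE, ∀ m₂ ∈ IE, m₁ ≠ m₂ →
      Disjoint (Uset R r m₁) (Uset R r m₂) := by
    intro m₁ h1 m₂ h2 hne12
    obtain ⟨h1E, h1sub, h1max⟩ := memIE.mp h1
    obtain ⟨h2E, h2sub, h2max⟩ := memIE.mp h2
    rw [Finset.disjoint_left]
    intro k hk1 hk2
    have h1r := hEr m₁ h1E
    have h2r := hEr m₂ h2E
    rw [mem_Uset_iff h1r] at hk1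
    rw [mem_Uset_iff h2r] at hk2
    rcases dom_total (reachIn_univ_of_reach (hreach k)) h1r h2r hk1 hk2 with h | h
    · have h21 : m₂ ∈ Uset R r m₁ := (mem_Uset_iff h1r).mpr h
      have hsub := h2max m₁ h1E h21 h1sub
      exact dom_antisymm hreach hne12 (hsub self_mem_Uset) h21
    · have h12 : m₁ ∈ Uset R r m₂ := (mem_Uset_iff h2r).mpr h
      have hsub := h1max m₂ h2E h12 h2sub
      exact dom_antisymm hreach hne12 h12 (hsub self_mem_Uset)
  -- assemble
  refine ⟨U ∪ E, I ∪ IE, ⟨?_, ?_, hII⟩, ⟨?_, ?_, ?_⟩, Finset.mem_union_left _ hiI⟩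
  · intro x hx
    rcases Finset.mem_union.mp hx with h | h
    · exact hU1 h
    · exact Finset.mem_erase.mpr ⟨(memE.mp h).1, Finset.mem_univ _⟩
  · intro i' hi'
    rcases Finset.mem_union.mp hi' with h | h
    · exact hUj' i' h
    · exact hEj' i' h
  · intro x hx
    rcases Finset.mem_union.mp hx with h | h
    · exact hI1 h
    · exact Finset.mem_erase.mpr ⟨hEr x ((memIE.mp h).1), Finset.mem_univ _⟩
  · intro x hx y hy hxy
    simp only [Finset.coe_union, Set.mem_union, Finset.mem_coe] at hx hy
    have cross : ∀ a b : Fin c, a ∈ I → b ∈ IE →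
        Disjoint (Uset R r a) (Uset R r b) := by
      intro a b haI hbIE
      rw [Finset.disjoint_left]
      intro z hza hzb
      exact (memE.mp ((memIE.mp hbIE).2.1 hzb)).2.1 (hUsub a haI hza)
    rcases hx with hx | hx <;> rcases hy with hy | hy
    · exact hI2 (Finset.mem_coe.mpr hx) (Finset.mem_coe.mpr hy) hxy
    · exact cross x y hx hy
    · exact (cross y x hy hx).symm
    · exact hdisjE x hx y hy hxy
  · ext x
    simp only [Finset.mem_union, Finset.mem_biUnion]
    constructor
    · rintro (h | h)
      · rw [hI3] at h
        obtain ⟨m, hm, hxm⟩ := Finset.mem_biUnion.mp h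
        exact ⟨m, Or.inl hm, hxm⟩
      · obtain ⟨m, hm, hxm⟩ := hcover x h
        exact ⟨m, Or.inr hm, hxm⟩
    · rintro ⟨m, hm, hxm⟩
      rcases hm with h | h
      · exact Or.inl (hUsub m h hxm)
      · exact Or.inr ((memIE.mp h).2.1 hxm)
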